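/- Let E be an invariant sequence space over a Banach space X with constant K as in condition (b1), and let x = (x_j)_{j=1}^∞ ∈ E have infinitely many nonzero coordinates. Let ℕ₁ ⊆ ℕ be such that ℕ₁ and ℕ∖ℕ₁ are both infinite and x_j ≠ 0 for at least one j ∈ ℕ₁, and let (ℕ_i)_{i=2}^∞ be a partition of ℕ∖ℕ₁ into pairwise disjoint infinite sets. Writing ℕ_i = {i_1 < i_2 < i_3 < ⋯}, define y₁ = x and, for i ≥ 2, y_i = Σ_{k=1}^∞ x_k ⊗ e_{i_k} (the X-valued sequence whose i_k-th coordinate is x_k and all of whose other coordinates are 0). Then: (i) each y_i belongs to E with ‖y_i‖_E ≤ K‖x⁰‖_E; (ii) the set {y_i : i ∈ ℕ} is linearly independent; (iii) for every (a_i)_{i=1}^∞ ∈ ℓ₁ the series Σ_{i=1}^∞ a_i y_i converges in E; and (iv) the resulting linear operator T : ℓ₁ → E, T((a_i)) = Σ_{i=1}^∞ a_i y_i, is injective. -/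

import Mathlib

/-- The zero-free version `x⁰` of a sequence: if `x` has infinitely many nonzero
coordinates, it enumerates them in increasing order of index; otherwise it is `0`. -/
noncomputable def zeroFree {X : Type*} [Zero X] (x : ℕ → X) : ℕ → X :=
  haveI := Classical.dec ({j | x j ≠ 0}.Infinite)
  if {j | x j ≠ 0}.Infinite then (fun k => x (Nat.nth (fun j => x j ≠ 0) k)) else 0

/-- An invariant sequence space over a Banach space `X`: an infinite-dimensional Banach
space of `X`-valued sequences satisfying (b1) and (b2) of Definition 2.1 of [BDFP]. -/
structure InvSeqSpace (𝕂 : Type*) [RCLike 𝕂] (X : Type*)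
    [NormedAddCommGroup X] [NormedSpace 𝕂 X] where
  carrier : Submodule 𝕂 (ℕ → X)
  nrm : (ℕ → X) → ℝ
  K : ℝ
  infinite_dim : ¬ Module.Finite 𝕂 carrier
  nrm_nonneg : ∀ x ∈ carrier, 0 ≤ nrm x
  nrm_eq_zero_iff : ∀ x ∈ carrier, (nrm x = 0 ↔ x = 0)
  nrm_add_le : ∀ x ∈ carrier, ∀ y ∈ carrier, nrm (x + y) ≤ nrm x + nrm y
  nrm_smul : ∀ (a : 𝕂), ∀ x ∈ carrier, nrm (a • x) = ‖a‖ * nrm x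
  complete : ∀ u : ℕ → (ℕ → X), (∀ n, u n ∈ carrier) →
    (∀ ε : ℝ, 0 < ε → ∃ N, ∀ m ≥ N, ∀ n ≥ N, nrm (u m - u n) < ε) →
    ∃ v ∈ carrier, ∀ ε : ℝ, 0 < ε → ∃ N, ∀ n ≥ N, nrm (u n - v) < ε
  zeroFree_mem_iff : ∀ x : ℕ → X, zeroFree x ≠ 0 → (x ∈ carrier ↔ zeroFree x ∈ carrier)
  nrm_le_K_mul : ∀ x : ℕ → X, zeroFree x ≠ 0 → x ∈ carrier → nrm x ≤ K * nrm (zeroFree x)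
  coord_le_nrm : ∀ x ∈ carrier, ∀ j, ‖x j‖ ≤ nrm x

/-- A strongly invariant sequence space: an invariant sequence space containing `c₀₀(X)`
and such that a sequence belongs to it iff all its subsequences do. -/
structure StrongInvSeqSpace (𝕂 : Type*) [RCLike 𝕂] (X : Type*)
    [NormedAddCommGroup X] [NormedSpace 𝕂 X] extends InvSeqSpace 𝕂 X where
  c00_subset : ∀ x : ℕ → X, (∃ N, ∀ j, N ≤ j → x j = 0) → x ∈ carrier
  mem_iff_subseq : ∀ x : ℕ → X,
    x ∈ carrier ↔ ∀ g : ℕ → ℕ, StrictMono g → (fun k => x (g k)) ∈ carrier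

/-- `f` is compatible with a sequence space `E` (Definition 2.3 of [NP]). -/
def Compatible (𝕂 : Type*) [RCLike 𝕂] {X Y : Type*}
    [NormedAddCommGroup X] [NormedSpace 𝕂 X] [NormedAddCommGroup Y] [NormedSpace 𝕂 Y]
    (f : X → Y) (E : Set (ℕ → Y)) : Prop :=
  f 0 = 0 ∧ ∀ (x : ℕ → X) (a : 𝕂), a ≠ 0 →
    (fun j => f (x j)) ∉ E → (fun j => f (a • x j)) ∉ E

/-- The set `G(E, f, (E_λ)_{λ∈Γ})`. -/
def Gset {𝕂 : Type*} [RCLike 𝕂] {X Y Γ : Type*}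
    [NormedAddCommGroup X] [NormedSpace 𝕂 X] [NormedAddCommGroup Y] [NormedSpace 𝕂 Y]
    (E : InvSeqSpace 𝕂 X) (f : X → Y) (F : Γ → StrongInvSeqSpace 𝕂 Y) : Set (ℕ → X) :=
  {x | x ∈ E.carrier ∧ (fun j => f (x j)) ∉ ⋃ lam, ((F lam).carrier : Set (ℕ → Y))}

/-- `W` is closed in the sequence space `E` (w.r.t. the metric induced by `E.nrm`). -/
def ClosedIn {𝕂 : Type*} [RCLike 𝕂] {X : Type*}
    [NormedAddCommGroup X] [NormedSpace 𝕂 X]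
    (E : InvSeqSpace 𝕂 X) (W : Set (ℕ → X)) : Prop :=
  ∀ x ∈ E.carrier, (∀ ε : ℝ, 0 < ε → ∃ y ∈ W, E.nrm (x - y) < ε) → x ∈ W

/-- If `g` is strictly monotone and `setOf Q = g '' setOf P` with `P` infinite, then the
increasing enumeration of `Q` is `g` composed with that of `P`. -/
lemma nth_eq_comp_nth {P Q : ℕ → Prop} (hP : (setOf P).Infinite)
    {g : ℕ → ℕ} (hg : StrictMono g) (hQ : setOf Q = g '' setOf P) :
    ∀ n, Nat.nth Q n = g (Nat.nth P n) := by
  have hQinf : (setOf Q).Infinite := by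
    rw [hQ]; exact hP.image hg.injective.injOn
  have h1 : StrictMono (Nat.nth Q) := Nat.nth_strictMono hQinf
  have h2 : StrictMono (fun n => g (Nat.nth P n)) := hg.comp (Nat.nth_strictMono hP)
  have hr : Set.range (Nat.nth Q) = Set.range (fun n => g (Nat.nth P n)) := by
    have hc : Set.range (fun n => g (Nat.nth P n)) = g '' Set.range (Nat.nth P) :=
      Set.range_comp g (Nat.nth P)
    rw [Nat.range_nth_of_infinite hQinf, show Set.ofPred Q = setOf Q from rfl, hQ, hc,
      Nat.range_nth_of_infinite hP, show Set.ofPred P = setOf P from rfl]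
  have := (h1.range_inj h2).1 hr
  intro n; exact congrFun this n

lemma zeroFree_eq_of_infinite {X : Type*} [Zero X] {x : ℕ → X}
    (h : {j | x j ≠ 0}.Infinite) :
    zeroFree x = fun k => x (Nat.nth (fun j => x j ≠ 0) k) := by
  rw [zeroFree]; exact if_pos h

/-- The "mother vector" construction inside the proof of Theorem 3.2: with `ℕ₁ = A 0` and
`(A (i+1))_{i∈ℕ}` a partition of `ℕ∖ℕ₁` into infinite sets, `y 0 = x` and
`y i = Σ_k x_k ⊗ e_{i_k}` (supported on `A i`), one has: (i) `y i ∈ E` with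
`‖y i‖_E ≤ K‖x⁰‖_E`; (ii) `(y i)` is linearly independent; (iii) `Σ a_i y_i` converges in
`E` for every `(a_i) ∈ ℓ₁`; (iv) the operator `T : ℓ₁ → E`, `T(a) = Σ a_i y_i`, is
injective. -/
theorem mother_vector_operator
    {𝕂 X : Type*} [RCLike 𝕂]
    [NormedAddCommGroup X] [NormedSpace 𝕂 X] [CompleteSpace X]
    (E : InvSeqSpace 𝕂 X)
    (x : ℕ → X) (hxE : x ∈ E.carrier) (hxinf : {j : ℕ | x j ≠ 0}.Infinite)
    (A : ℕ → Set ℕ) (hAinf : ∀ i, (A i).Infinite)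
    (hAdisj : ∀ i j, i ≠ j → Disjoint (A i) (A j))
    (hA0c : ((A 0)ᶜ : Set ℕ).Infinite)
    (hA0x : ∃ j ∈ A 0, x j ≠ 0)
    (hAcover : (⋃ i, A (i + 1)) = (A 0)ᶜ)
    (y : ℕ → (ℕ → X)) (hy0 : y 0 = x)
    (hy : ∀ i, 1 ≤ i →
      (∀ k, y i (Nat.nth (fun j => j ∈ A i) k) = x k) ∧ (∀ j, j ∉ A i → y i j = 0)) :
    (∀ i, y i ∈ E.carrier ∧ E.nrm (y i) ≤ E.K * E.nrm (zeroFree x)) ∧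
    LinearIndependent 𝕂 y ∧
    (∀ a : ℕ → 𝕂, Summable (fun i => ‖a i‖) →
      ∃ s ∈ E.carrier, ∀ ε : ℝ, 0 < ε → ∃ N, ∀ m, N ≤ m →
        E.nrm ((∑ i ∈ Finset.range m, a i • y i) - s) < ε) ∧
    (∀ a : ℕ → 𝕂, Summable (fun i => ‖a i‖) →
      (∀ ε : ℝ, 0 < ε → ∃ N, ∀ m, N ≤ m →
        E.nrm (∑ i ∈ Finset.range m, a i • y i) < ε) → a = 0) := by
  classical
  set P : ℕ → Prop := fun j => x j ≠ 0 with hP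
  have hPinf : (setOf P).Infinite := hxinf
  have hzx : zeroFree x = fun k => x (Nat.nth P k) := zeroFree_eq_of_infinite hxinf
  have hz0 : zeroFree x ≠ 0 := by
    intro h
    have h0 : zeroFree x 0 = 0 := congrFun h 0
    rw [hzx] at h0
    exact (Nat.nth_mem_of_infinite hPinf 0) h0
  have hzmem : zeroFree x ∈ E.carrier := (E.zeroFree_mem_iff x hz0).1 hxE
  -- the enumeration of A i
  set g : ℕ → ℕ → ℕ := fun i => Nat.nth (fun j => j ∈ A i) with hg
  have hgmem : ∀ i k, g i k ∈ A i := fun i k => Nat.nth_mem_of_infinite (hAinf i) k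
  have hgmono : ∀ i, StrictMono (g i) := fun i => Nat.nth_strictMono (hAinf i)
  -- the zero-free version of y i equals that of x
  have hzy : ∀ i, 1 ≤ i → zeroFree (y i) = zeroFree x := by
    intro i hi
    have hQset : setOf (fun j => y i j ≠ 0) = g i '' setOf P := by
      ext j
      constructor
      · intro hj
        have hjA : j ∈ A i := by
          by_contra hjA
          exact hj ((hy i hi).2 j hjA)
        have : j ∈ Set.range (g i) := by
          rw [hg]
          rw [Nat.range_nth_of_infinite (p := fun j => j ∈ A i) (hAinf i)]
          exact hjA
        obtain ⟨k, hk⟩ := this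
        refine ⟨k, ?_, hk⟩
        have : y i (g i k) = x k := (hy i hi).1 k
        rw [hk] at this
        show x k ≠ 0
        rw [← this]
        exact hj
      · rintro ⟨k, hk, rfl⟩
        have : y i (g i k) = x k := (hy i hi).1 k
        show y i (g i k) ≠ 0
        rw [this]
        exact hk
    have hQinf : {j | y i j ≠ 0}.Infinite := by
      rw [show {j | y i j ≠ 0} = setOf (fun j => y i j ≠ 0) from rfl, hQset]
      exact hPinf.image (hgmono i).injective.injOn
    have hnth := nth_eq_comp_nth hPinf (hgmono i) hQset
    rw [zeroFree_eq_of_infinite hQinf, hzx]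
    funext k
    rw [hnth k]
    exact (hy i hi).1 (Nat.nth P k)
  -- Part (i)
  have part1 : ∀ i, y i ∈ E.carrier ∧ E.nrm (y i) ≤ E.K * E.nrm (zeroFree x) := by
    intro i
    rcases Nat.eq_zero_or_pos i with hi | hi
    · subst hi; rw [hy0]; exact ⟨hxE, E.nrm_le_K_mul x hz0 hxE⟩
    · have h := hzy i hi
      have hz0' : zeroFree (y i) ≠ 0 := h ▸ hz0
      have hmem : y i ∈ E.carrier := (E.zeroFree_mem_iff (y i) hz0').2 (h ▸ hzmem)
      refine ⟨hmem, ?_⟩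
      have := E.nrm_le_K_mul (y i) hz0' hmem
      rwa [h] at this
  -- common facts for (iii), (iv)
  set C := E.K * E.nrm (zeroFree x) with hC
  have hmem : ∀ i, y i ∈ E.carrier := fun i => (part1 i).1
  have hleC : ∀ i, E.nrm (y i) ≤ C := fun i => (part1 i).2
  have hC0 : 0 ≤ C := le_trans (E.nrm_nonneg (y 0) (hmem 0)) (hleC 0)
  have hsum_mem : ∀ (a : ℕ → 𝕂) (s : Finset ℕ), (∑ i ∈ s, a i • y i) ∈ E.carrier :=
    fun a s => Submodule.sum_mem _ fun i _ => Submodule.smul_mem _ _ (hmem i)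
  have hnrm_sum : ∀ (a : ℕ → 𝕂) (s : Finset ℕ),
      E.nrm (∑ i ∈ s, a i • y i) ≤ (∑ i ∈ s, ‖a i‖) * C := by
    intro a s
    induction s using Finset.cons_induction with
    | empty =>
      simp only [Finset.sum_empty, zero_mul]
      exact le_of_eq ((E.nrm_eq_zero_iff 0 (Submodule.zero_mem _)).2 rfl)
    | cons i s hi ih =>
      rw [Finset.sum_cons, Finset.sum_cons, add_mul]
      refine le_trans (E.nrm_add_le _ (Submodule.smul_mem _ _ (hmem i)) _ (hsum_mem a s)) ?_
      refine add_le_add ?_ ih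
      rw [E.nrm_smul (a i) (y i) (hmem i)]
      exact mul_le_mul_of_nonneg_left (hleC i) (norm_nonneg _)
  refine ⟨part1, ?_, ?_, ?_⟩
  -- Part (ii): linear independence
  · rw [linearIndependent_iff']
    intro s c hsum
    obtain ⟨j₀, hj₀A, hj₀x⟩ := hA0x
    have hcoord : ∀ j, (∑ i ∈ s, c i • y i) j = ∑ i ∈ s, c i • y i j := by
      intro j; simp [Finset.sum_apply]
    have h0 : 0 ∈ s → c 0 = 0 := by
      intro h0s
      have := congrFun hsum j₀
      rw [hcoord] at this
      rw [Finset.sum_eq_single_of_mem 0 h0s] at this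
      · rw [hy0] at this
        simp only [Pi.zero_apply] at this
        rcases smul_eq_zero.1 this with h | h
        · exact h
        · exact absurd h hj₀x
      · intro b _ hb
        have hb1 : 1 ≤ b := Nat.one_le_iff_ne_zero.2 hb
        have : j₀ ∉ A b := Set.disjoint_left.1 (hAdisj 0 b (Ne.symm hb)) hj₀A
        rw [(hy b hb1).2 j₀ this, smul_zero]
    intro i his
    rcases Nat.eq_zero_or_pos i with hi | hi
    · exact hi ▸ h0 (hi ▸ his)
    · set k₀ := Nat.nth P 0 with hk₀def
      have hk₀ : x k₀ ≠ 0 := Nat.nth_mem_of_infinite hPinf 0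
      set j₁ := g i k₀ with hj₁def
      have hj₁A : j₁ ∈ A i := hgmem i k₀
      have := congrFun hsum j₁
      rw [hcoord] at this
      rw [Finset.sum_eq_single_of_mem i his] at this
      · rw [(hy i hi).1 k₀] at this
        simp only [Pi.zero_apply] at this
        rcases smul_eq_zero.1 this with h | h
        · exact h
        · exact absurd h hk₀
      · intro b hbs hb
        rcases Nat.eq_zero_or_pos b with hb0 | hb1
        · subst hb0; rw [h0 hbs, zero_smul]
        · have : j₁ ∉ A b := Set.disjoint_left.1 (hAdisj i b (Ne.symm hb)) hj₁A
          rw [(hy b hb1).2 j₁ this, smul_zero]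
  -- Part (iii): convergence
  · intro a ha
    set u : ℕ → (ℕ → X) := fun m => ∑ i ∈ Finset.range m, a i • y i with hu
    have humem : ∀ m, u m ∈ E.carrier := fun m => hsum_mem a _
    have hnrm_neg : ∀ z ∈ E.carrier, E.nrm (-z) = E.nrm z := by
      intro z hz
      have := E.nrm_smul (-1 : 𝕂) z hz
      rwa [neg_one_smul, norm_neg, norm_one, one_mul] at this
    set D := C + 1 with hD
    have hD0 : (0 : ℝ) < D := by linarith
    set t : ℕ → ℝ := fun n => ∑ i ∈ Finset.range n, ‖a i‖ with ht
    have htc : CauchySeq t := (ha.hasSum.tendsto_sum_nat).cauchySeq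
    have hcau : ∀ ε : ℝ, 0 < ε → ∃ N, ∀ m ≥ N, ∀ n ≥ N, E.nrm (u m - u n) < ε := by
      intro ε hε
      obtain ⟨N, hN⟩ := Metric.cauchySeq_iff.1 htc (ε / D) (div_pos hε hD0)
      refine ⟨N, ?_⟩
      have key : ∀ m n, N ≤ m → N ≤ n → n ≤ m → E.nrm (u m - u n) < ε := by
        intro m n hm hn hnm
        have hsub : Finset.range n ⊆ Finset.range m := Finset.range_subset_range.2 hnm
        have heq : u m - u n = ∑ i ∈ Finset.range m \ Finset.range n, a i • y i :=
          (Finset.sum_sdiff_eq_sub hsub).symm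
        have heq2 : (∑ i ∈ Finset.range m \ Finset.range n, ‖a i‖) = t m - t n :=
          Finset.sum_sdiff_eq_sub hsub
        have hlt : (∑ i ∈ Finset.range m \ Finset.range n, ‖a i‖) < ε / D := by
          rw [heq2]
          calc t m - t n ≤ |t m - t n| := le_abs_self _
            _ = dist (t m) (t n) := (Real.dist_eq _ _).symm
            _ < ε / D := hN m hm n hn
        have hnn : (0:ℝ) ≤ ∑ i ∈ Finset.range m \ Finset.range n, ‖a i‖ :=
          Finset.sum_nonneg fun _ _ => norm_nonneg _
        calc E.nrm (u m - u n)
            ≤ (∑ i ∈ Finset.range m \ Finset.range n, ‖a i‖) * C := by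
              rw [heq]; exact hnrm_sum a _
          _ ≤ (∑ i ∈ Finset.range m \ Finset.range n, ‖a i‖) * D :=
              mul_le_mul_of_nonneg_left (by linarith) hnn
          _ < (ε / D) * D := by
              exact mul_lt_mul_of_pos_right hlt hD0
          _ = ε := div_mul_cancel₀ ε (ne_of_gt hD0)
      intro m hm n hn
      rcases le_total n m with hnm | hmn
      · exact key m n hm hn hnm
      · have := key n m hn hm hmn
        have hrw : u m - u n = -(u n - u m) := (neg_sub (u n) (u m)).symm
        rw [hrw, hnrm_neg _ (Submodule.sub_mem _ (humem n) (humem m))]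
        exact this
    obtain ⟨v, hv, hconv⟩ := E.complete u humem hcau
    refine ⟨v, hv, ?_⟩
    intro ε hε
    obtain ⟨N, hN⟩ := hconv ε hε
    exact ⟨N, fun m hm => hN m hm⟩
  -- Part (iv): injectivity
  · intro a _ hsmall
    set u : ℕ → (ℕ → X) := fun m => ∑ i ∈ Finset.range m, a i • y i with hu
    have hcoord : ∀ m j, u m j = ∑ i ∈ Finset.range m, a i • y i j := by
      intro m j; simp [hu, Finset.sum_apply]
    have key : ∀ (j : ℕ) (w : X) (M : ℕ), (∀ m, M ≤ m → u m j = w) → w = 0 := by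
      intro j w M hw
      by_contra hwne
      obtain ⟨N, hN⟩ := hsmall ‖w‖ (norm_pos_iff.2 hwne)
      have hm : M ≤ max M N := le_max_left _ _
      have hn : N ≤ max M N := le_max_right _ _
      have h1 : ‖u (max M N) j‖ ≤ E.nrm (u (max M N)) :=
        E.coord_le_nrm _ (hsum_mem a _) j
      rw [hw _ hm] at h1
      exact absurd (lt_of_le_of_lt h1 (hN _ hn)) (lt_irrefl _)
    obtain ⟨j₀, hj₀A, hj₀x⟩ := hA0x
    have h0 : a 0 = 0 := by
      have hw : ∀ m, 1 ≤ m → u m j₀ = a 0 • x j₀ := by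
        intro m hm
        rw [hcoord]
        rw [Finset.sum_eq_single_of_mem 0 (Finset.mem_range.2 hm)]
        · rw [hy0]
        · intro b _ hb
          have hb1 : 1 ≤ b := Nat.one_le_iff_ne_zero.2 hb
          have : j₀ ∉ A b := Set.disjoint_left.1 (hAdisj 0 b (Ne.symm hb)) hj₀A
          rw [(hy b hb1).2 j₀ this, smul_zero]
      have := key j₀ (a 0 • x j₀) 1 hw
      rcases smul_eq_zero.1 this with h | h
      · exact h
      · exact absurd h hj₀x
    funext i
    rcases Nat.eq_zero_or_pos i with hi | hi
    · subst hi; exact h0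
    · set k₀ := Nat.nth P 0 with hk₀def
      have hk₀ : x k₀ ≠ 0 := Nat.nth_mem_of_infinite hPinf 0
      set j₁ := g i k₀ with hj₁def
      have hj₁A : j₁ ∈ A i := hgmem i k₀
      have hw : ∀ m, i + 1 ≤ m → u m j₁ = a i • x k₀ := by
        intro m hm
        rw [hcoord]
        rw [Finset.sum_eq_single_of_mem i (Finset.mem_range.2 hm)]
        · rw [(hy i hi).1 k₀]
        · intro b _ hb
          rcases Nat.eq_zero_or_pos b with hb0 | hb1
          · subst hb0; rw [h0, zero_smul]
          · have : j₁ ∉ A b := Set.disjoint_left.1 (hAdisj i b (Ne.symm hb)) hj₁A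
            rw [(hy b hb1).2 j₁ this, smul_zero]
      have := key j₁ (a i • x k₀) (i + 1) hw
      rcases smul_eq_zero.1 this with h | h
      · exact h
      · exact absurd h hk₀
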